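/- Let p, q be coprime positive integers and let a₀ > 0 satisfy 0 < a₀^{-2} < 1/q. Then the set N(a₀) = {(j,k,l) ∈ (ℤ² \ {(0,0)}) × {0,1} : λ_{j,k,l}(a₀) = 0} of lattice points corresponding to zero eigenvalues is finite. -/
import Mathlib


/-- The eigenvalue `λ_{j,k,l}(a) = (pj/q)² − k⁴ + (−1)^l a^{-2} k²`. -/
noncomputable def lam (p q : ℕ) (a : ℝ) (j k : ℤ) (l : Fin 2) : ℝ :=
  ((p : ℝ) * j / q) ^ 2 - (k : ℝ) ^ 4 + (-1) ^ (l : ℕ) * a⁻¹ ^ 2 * (k : ℝ) ^ 2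

set_option maxHeartbeats 1000000 in
theorem stmt8 (p q : ℕ) (hp : 0 < p) (hq : 0 < q) (hpq : Nat.Coprime p q)
    (a₀ : ℝ) (ha₀ : 0 < a₀) (h1 : 0 < a₀⁻¹ ^ 2) (h2 : a₀⁻¹ ^ 2 < 1 / q) :
    Set.Finite {x : (ℤ × ℤ) × Fin 2 |
      x.1 ≠ (0, 0) ∧ lam p q a₀ x.1.1 x.1.2 x.2 = 0} := by
  have hq0 : (0 : ℝ) < q := by exact_mod_cast hq
  have hp0 : (0 : ℝ) < p := by exact_mod_cast hp
  set r : ℝ := a₀⁻¹ ^ 2 with hrdef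
  have hqr : (q : ℝ) * r < 1 := by
    have := (lt_div_iff₀ hq0).mp h2
    linarith
  convert Set.finite_empty
  ext ⟨⟨j, k⟩, l⟩
  simp only [Set.mem_setOf_eq, Set.mem_empty_iff_false, iff_false, not_and]
  intro hjk hlam
  unfold lam at hlam
  by_cases hk : k = 0
  · subst hk
    have hj : j ≠ 0 := by simpa using hjk
    have hjR : ((j : ℝ)) ≠ 0 := Int.cast_ne_zero.mpr hj
    have : ((p : ℝ) * j / q) ^ 2 = 0 := by push_cast at hlam ⊢; nlinarith [hlam]
    have h3 : (p : ℝ) * j / q = 0 := by nlinarith [sq_nonneg ((p : ℝ) * j / q)]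
    have := div_eq_zero_iff.mp h3
    rcases this with h4 | h4
    · rcases mul_eq_zero.mp h4 with h5 | h5
      · exact absurd h5 hp0.ne'
      · exact hjR h5
    · exact absurd h4 hq0.ne'
  · have hkR : ((k : ℝ)) ≠ 0 := Int.cast_ne_zero.mpr hk
    have hk2 : (0 : ℝ) < (k : ℝ) ^ 2 := by positivity
    have hqk2 : (0 : ℝ) < (q : ℝ) * (k : ℝ) ^ 2 := by positivity
    set A : ℤ := |(p : ℤ) * j| with hAdef
    set B : ℤ := (q : ℤ) * k ^ 2 with hBdef
    have hA0 : (0 : ℝ) ≤ (A : ℝ) := by positivity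
    have hA2 : ((A : ℝ)) ^ 2 = ((p : ℝ) * j) ^ 2 := by
      rw [hAdef]; push_cast; rw [sq_abs]
    have hBR : ((B : ℝ)) = (q : ℝ) * (k : ℝ) ^ 2 := by rw [hBdef]; push_cast; ring
    have hqne : (q : ℝ) ≠ 0 := hq0.ne'
    fin_cases l <;> simp only [Fin.isValue, Fin.val_zero, Fin.val_one, pow_zero,
      pow_one, one_mul, neg_one_mul, neg_mul] at hlam
    · -- l = 0 : (pj/q)² - k⁴ + r k² = 0, so A² = q²k⁴ - q²rk² < B²
      have E : ((A : ℝ)) ^ 2 = (q : ℝ) ^ 2 * (k : ℝ) ^ 4 - (q : ℝ) ^ 2 * r * (k : ℝ) ^ 2 := by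
        rw [hA2]
        have h := hlam
        field_simp at h
        have hra : a₀⁻¹ ^ 2 * a₀ ^ 2 = 1 := by
          rw [← mul_pow]; simp [ha₀.ne']
        linear_combination (a₀⁻¹ ^ 2) * h + ((q : ℝ)^2 * (k : ℝ)^4 - ((p : ℝ) * (j : ℝ))^2) * hra
      have hAB : (A : ℝ) < (B : ℝ) := by
        rw [hBR]
        nlinarith [mul_pos (mul_pos (mul_pos hq0 hq0) h1) hk2]
      have hABz : A < B := by exact_mod_cast hAB
      have hd : (1 : ℝ) ≤ (B : ℝ) - (A : ℝ) := by
        have : A + 1 ≤ B := hABz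
        have : ((A : ℝ)) + 1 ≤ (B : ℝ) := by exact_mod_cast this
        linarith
      -- q²rk² = B² - A² = (B-A)(B+A) ≥ B+A ≥ B = qk², but q²rk² < qk²
      have key : (q : ℝ) ^ 2 * r * (k : ℝ) ^ 2 = ((B : ℝ) - A) * ((B : ℝ) + A) := by
        rw [hBR]; nlinarith [E]
      nlinarith [mul_le_mul hd (le_refl ((B : ℝ) + A)) (by linarith) (by linarith),
        mul_pos hq0 hk2]
    · -- l = 1 : A² = q²k⁴ + q²rk² > B²
      have E : ((A : ℝ)) ^ 2 = (q : ℝ) ^ 2 * (k : ℝ) ^ 4 + (q : ℝ) ^ 2 * r * (k : ℝ) ^ 2 := by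
        rw [hA2]
        have h := hlam
        field_simp at h
        have hra : a₀⁻¹ ^ 2 * a₀ ^ 2 = 1 := by
          rw [← mul_pow]; simp [ha₀.ne']
        linear_combination (a₀⁻¹ ^ 2) * h + ((q : ℝ)^2 * (k : ℝ)^4 - ((p : ℝ) * (j : ℝ))^2) * hra
      have hAB : (B : ℝ) < (A : ℝ) := by
        rw [hBR]
        nlinarith [mul_pos (mul_pos (mul_pos hq0 hq0) h1) hk2]
      have hABz : B < A := by exact_mod_cast hAB
      have hd : (1 : ℝ) ≤ (A : ℝ) - (B : ℝ) := by
        have : B + 1 ≤ A := hABz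
        have : ((B : ℝ)) + 1 ≤ (A : ℝ) := by exact_mod_cast this
        linarith
      have key : (q : ℝ) ^ 2 * r * (k : ℝ) ^ 2 = ((A : ℝ) - B) * ((A : ℝ) + B) := by
        rw [hBR]; nlinarith [E]
      nlinarith [mul_le_mul hd (le_refl ((A : ℝ) + B)) (by linarith [hBR, hqk2]) (by linarith),
        mul_pos hq0 hk2]
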